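/- Let f be a homogeneous polynomial of degree D and g a homogeneous polynomial of degree D' in the complex variables x_0,…,x_n. Then ‖f·g‖_sym ≤ ‖f‖_sym · ‖g‖_sym. -/

import Mathlib

open Finset

section Aux
open Polynomial

lemma choose_fact (i j : ℕ) : (i + j).choose i * i.factorial * j.factorial = (i + j).factorial := by
  have h := Nat.choose_mul_factorial_mul_factorial (Nat.le_add_right i j)
  simpa using h

lemma vandermonde_multi {σ : Type*} [Fintype σ] [DecidableEq σ] (K : σ →₀ ℕ) (D : ℕ) :
    ∑ μ ∈ (univ : Finset σ).finsuppAntidiag D, ∏ t, (K t).choose (μ t)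
      = (∑ t, K t).choose D := by
  have h := PowerSeries.coeff_prod
    (fun t : σ => ((((1 : ℕ[X]) + X) ^ (K t) : ℕ[X]) : PowerSeries ℕ)) D univ
  have h2 : (∏ j : σ, ((((1 : ℕ[X]) + X) ^ (K j) : ℕ[X]) : PowerSeries ℕ))
      = ((((1 : ℕ[X]) + X) ^ (∑ t, K t) : ℕ[X]) : PowerSeries ℕ) := by
    rw [show (fun j : σ => ((((1 : ℕ[X]) + X) ^ (K j) : ℕ[X]) : PowerSeries ℕ))
        = (fun j : σ => coeToPowerSeries.ringHom (((1 : ℕ[X]) + X) ^ (K j))) from rfl,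
      ← map_prod coeToPowerSeries.ringHom, prod_pow_eq_pow_sum]
    rfl
  rw [h2, Polynomial.coeff_coe, coeff_one_add_X_pow] at h
  simp only [Polynomial.coeff_coe, coeff_one_add_X_pow, Nat.cast_id] at h
  simpa using h.symm

end Aux

/-- The symmetric (Bombieri) norm of a polynomial in `n+1` complex variables:
`‖f‖_sym = (Σ_I |a_I|² · (i_0!⋯i_n!)/(|I|)!)^{1/2}`. For a homogeneous polynomial
of degree `D`, `|I| = D` for every `I` in the support. -/
noncomputable def symNorm {n : ℕ} (f : MvPolynomial (Fin (n + 1)) ℂ) : ℝ :=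
  Real.sqrt (∑ I ∈ f.support,
    ‖MvPolynomial.coeff I f‖ ^ 2 *
      ((∏ k, Nat.factorial (I k) : ℕ) : ℝ) / (Nat.factorial (∑ k, I k) : ℝ))

theorem stmt_1 (n D D' : ℕ) (f g : MvPolynomial (Fin (n + 1)) ℂ)
    (hf : f.IsHomogeneous D) (hg : g.IsHomogeneous D') :
    symNorm (f * g) ≤ symNorm f * symNorm g := by
  classical
  have hfg : (f * g).IsHomogeneous (D + D') := hf.mul hg
  set N := D + D' with hN
  have hdeg : ∀ (I : Fin (n + 1) →₀ ℕ), (∑ k, I k) = I.degree := by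
    intro I
    exact (Finset.sum_subset (Finset.subset_univ _)
      (fun x _ hx => Finsupp.notMem_support_iff.1 hx)).symm
  have hsupp : ∀ (p : MvPolynomial (Fin (n+1)) ℂ) (d : ℕ), p.IsHomogeneous d →
      ∀ I ∈ p.support, (∑ k, I k) = d := by
    intro p d hp I hI
    rw [hdeg]
    by_contra h
    exact MvPolynomial.mem_support_iff.1 hI (hp.coeff_eq_zero h)
  set w : (Fin (n + 1) →₀ ℕ) → ℝ := fun I => ((∏ k, Nat.factorial (I k) : ℕ) : ℝ) with hw
  have hwpos : ∀ I, 0 < w I := by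
    intro I
    simp only [hw]
    positivity
  have hrw : ∀ (p : MvPolynomial (Fin (n+1)) ℂ) (d : ℕ), p.IsHomogeneous d →
      symNorm p = Real.sqrt (∑ I ∈ p.support,
        ‖MvPolynomial.coeff I p‖ ^ 2 * w I / (Nat.factorial d : ℝ)) := by
    intro p d hp
    unfold symNorm
    congr 1
    exact Finset.sum_congr rfl (fun I hI => by rw [hsupp p d hp I hI])
  rw [hrw f D hf, hrw g D' hg, hrw (f*g) N hfg]
  have hSf : (0:ℝ) ≤ ∑ I ∈ f.support,
      ‖MvPolynomial.coeff I f‖ ^ 2 * w I / (Nat.factorial D : ℝ) := by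
    apply Finset.sum_nonneg; intro I _; positivity
  rw [← Real.sqrt_mul hSf]
  apply Real.sqrt_le_sqrt
  rw [Finset.sum_mul_sum, ← Finset.sum_product']
  -- abbreviations
  set F : ((Fin (n+1) →₀ ℕ) × (Fin (n+1) →₀ ℕ)) → ℝ := fun p =>
    ‖MvPolynomial.coeff p.1 f‖ ^ 2 * w p.1 / (Nat.factorial D : ℝ) *
      (‖MvPolynomial.coeff p.2 g‖ ^ 2 * w p.2 / (Nat.factorial D' : ℝ)) with hF
  have hFnonneg : ∀ p, 0 ≤ F p := by
    intro p; simp only [hF]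
    have := hwpos p.1; have := hwpos p.2
    positivity
  set S : (Fin (n+1) →₀ ℕ) → Finset ((Fin (n+1) →₀ ℕ) × (Fin (n+1) →₀ ℕ)) :=
    fun K => (Finset.HasAntidiagonal.antidiagonal K).filter (fun p => p.1 ∈ f.support ∧ p.2 ∈ g.support) with hS
  -- main per-K bound
  have key : ∀ K ∈ (f * g).support,
      ‖MvPolynomial.coeff K (f * g)‖ ^ 2 * w K / (Nat.factorial N : ℝ)
        ≤ ∑ p ∈ S K, F p := by
    intro K hK
    have hKdeg : (∑ k, K k) = N := hsupp _ N hfg K hK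
    -- the "choose" weight
    set u : ((Fin (n+1) →₀ ℕ) × (Fin (n+1) →₀ ℕ)) → ℝ :=
      fun p => ((∏ t, (K t).choose (p.1 t) : ℕ) : ℝ) with hu
    have hupos : ∀ p ∈ S K, 0 < u p := by
      intro p hp
      simp only [hS, Finset.mem_filter, Finset.HasAntidiagonal.mem_antidiagonal] at hp
      simp only [hu]
      have : ∀ t, 0 < (K t).choose (p.1 t) := by
        intro t
        apply Nat.choose_pos
        rw [← hp.1]
        exact le_add_right (le_refl _) |>.trans (le_of_eq (Finsupp.add_apply p.1 p.2 t).symm)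
      exact_mod_cast Finset.prod_pos (fun t _ => this t)
    -- triangle inequality
    have htri : ‖MvPolynomial.coeff K (f * g)‖
        ≤ ∑ p ∈ S K, ‖MvPolynomial.coeff p.1 f‖ * ‖MvPolynomial.coeff p.2 g‖ := by
      rw [MvPolynomial.coeff_mul]
      refine le_trans (norm_sum_le _ _) (le_of_eq ?_)
      rw [hS]
      rw [Finset.sum_filter_of_ne]
      · exact Finset.sum_congr rfl (fun p _ => norm_mul _ _)
      · intro p _ hne
        constructor
        · by_contra h
          exact hne (by simp [MvPolynomial.notMem_support_iff.1 h])
        · by_contra h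
          exact hne (by simp [MvPolynomial.notMem_support_iff.1 h])
    -- Cauchy-Schwarz
    have hCS : (∑ p ∈ S K, ‖MvPolynomial.coeff p.1 f‖ * ‖MvPolynomial.coeff p.2 g‖) ^ 2
        ≤ (∑ p ∈ S K, u p) *
          (∑ p ∈ S K, (‖MvPolynomial.coeff p.1 f‖ * ‖MvPolynomial.coeff p.2 g‖) ^ 2 / u p) := by
      have h := Finset.sum_mul_sq_le_sq_mul_sq (S K)
        (fun p => Real.sqrt (u p))
        (fun p => ‖MvPolynomial.coeff p.1 f‖ * ‖MvPolynomial.coeff p.2 g‖ / Real.sqrt (u p))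
      calc (∑ p ∈ S K, ‖MvPolynomial.coeff p.1 f‖ * ‖MvPolynomial.coeff p.2 g‖) ^ 2
          = (∑ p ∈ S K, Real.sqrt (u p) *
              (‖MvPolynomial.coeff p.1 f‖ * ‖MvPolynomial.coeff p.2 g‖ / Real.sqrt (u p))) ^ 2 := by
            congr 1
            refine Finset.sum_congr rfl (fun p hp => ?_)
            have hs : Real.sqrt (u p) ≠ 0 := ne_of_gt (Real.sqrt_pos.2 (hupos p hp))
            rw [mul_div_assoc']
            exact (mul_div_cancel_left₀ _ hs).symm
        _ ≤ (∑ p ∈ S K, Real.sqrt (u p) ^ 2) *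
            (∑ p ∈ S K, (‖MvPolynomial.coeff p.1 f‖ * ‖MvPolynomial.coeff p.2 g‖ / Real.sqrt (u p)) ^ 2) := h
        _ = (∑ p ∈ S K, u p) *
            (∑ p ∈ S K, (‖MvPolynomial.coeff p.1 f‖ * ‖MvPolynomial.coeff p.2 g‖) ^ 2 / u p) := by
            congr 1
            · exact Finset.sum_congr rfl (fun p hp => Real.sq_sqrt (le_of_lt (hupos p hp)))
            · refine Finset.sum_congr rfl (fun p hp => ?_)
              rw [div_pow, Real.sq_sqrt (le_of_lt (hupos p hp))]
    -- the Vandermonde bound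
    have hV : (∑ p ∈ S K, u p) ≤ ((N.choose D : ℕ) : ℝ) := by
      have hnat : (∑ p ∈ S K, ∏ t, (K t).choose (p.1 t)) ≤ N.choose D := by
        have hinj : ∀ p ∈ S K, ∀ q ∈ S K, p.1 = q.1 → p = q := by
          intro p hp q hq hpq
          simp only [hS, Finset.mem_filter, Finset.HasAntidiagonal.mem_antidiagonal] at hp hq
          have h12 : p.1 + p.2 = q.1 + q.2 := by rw [hp.1, hq.1]
          rw [hpq] at h12
          exact Prod.ext hpq (add_left_cancel h12)
        have himg : ∑ p ∈ S K, ∏ t, (K t).choose (p.1 t)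
            = ∑ μ ∈ (S K).image Prod.fst, ∏ t, (K t).choose (μ t) :=
          (Finset.sum_image (f := fun μ => (∏ t, (K t).choose (μ t))) (g := Prod.fst) hinj).symm
        rw [himg]
        have hsub : (S K).image Prod.fst ⊆ (univ : Finset (Fin (n+1))).finsuppAntidiag D := by
          intro μ hμ
          rw [Finset.mem_image] at hμ
          obtain ⟨p, hp, rfl⟩ := hμ
          simp only [hS, Finset.mem_filter] at hp
          rw [Finset.mem_finsuppAntidiag]
          exact ⟨hsupp f D hf p.1 hp.2.1, Finset.subset_univ _⟩
        calc ∑ μ ∈ (S K).image Prod.fst, ∏ t, (K t).choose (μ t)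
            ≤ ∑ μ ∈ (univ : Finset (Fin (n+1))).finsuppAntidiag D, ∏ t, (K t).choose (μ t) :=
              Finset.sum_le_sum_of_subset hsub
          _ = (∑ t, K t).choose D := vandermonde_multi K D
          _ = N.choose D := by rw [hKdeg]
      calc (∑ p ∈ S K, u p) = ((∑ p ∈ S K, ∏ t, (K t).choose (p.1 t) : ℕ) : ℝ) := by
            simp only [hu]; push_cast; rfl
        _ ≤ ((N.choose D : ℕ) : ℝ) := by exact_mod_cast hnat
    -- per-term identity
    have hterm : ∀ p ∈ S K,
        ((N.choose D : ℕ) : ℝ) * ((‖MvPolynomial.coeff p.1 f‖ * ‖MvPolynomial.coeff p.2 g‖) ^ 2 / u p)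
          * w K / (Nat.factorial N : ℝ) = F p := by
      intro p hp
      have hpa : p.1 + p.2 = K := by
        simp only [hS, Finset.mem_filter, Finset.HasAntidiagonal.mem_antidiagonal] at hp
        exact hp.1
      have h1 : u p * w p.1 * w p.2 = w K := by
        simp only [hu, hw]
        push_cast
        rw [← Finset.prod_mul_distrib, ← Finset.prod_mul_distrib]
        apply Finset.prod_congr rfl
        intro t _
        have : K t = p.1 t + p.2 t := by rw [← hpa]; rfl
        rw [this]
        exact_mod_cast congrArg (Nat.cast (R := ℝ)) (choose_fact (p.1 t) (p.2 t))
      have h2 : ((N.choose D : ℕ) : ℝ) * (Nat.factorial D : ℝ) * (Nat.factorial D' : ℝ) = (Nat.factorial N : ℝ) := by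
        exact_mod_cast congrArg (Nat.cast (R := ℝ)) (choose_fact D D')
      have hu0 : u p ≠ 0 := ne_of_gt (hupos p hp)
      have hD0 : (Nat.factorial D : ℝ) ≠ 0 := by positivity
      have hD'0 : (Nat.factorial D' : ℝ) ≠ 0 := by positivity
      have hN0 : (Nat.factorial N : ℝ) ≠ 0 := by positivity
      have h3 : ((N.choose D : ℕ) : ℝ) * w K * ((Nat.factorial D : ℝ) * (Nat.factorial D' : ℝ))
          = u p * w p.1 * w p.2 * (Nat.factorial N : ℝ) := by
        rw [← h1, ← h2]; ring
      simp only [hF]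
      rw [mul_pow]
      field_simp
      linear_combination (‖MvPolynomial.coeff p.1 f‖ ^ 2 * ‖MvPolynomial.coeff p.2 g‖ ^ 2) * h3
    -- combine
    have hsum2nonneg : 0 ≤ ∑ p ∈ S K,
        (‖MvPolynomial.coeff p.1 f‖ * ‖MvPolynomial.coeff p.2 g‖) ^ 2 / u p := by
      apply Finset.sum_nonneg
      intro p hp
      have := hupos p hp
      positivity
    have hc2 : ‖MvPolynomial.coeff K (f * g)‖ ^ 2
        ≤ ((N.choose D : ℕ) : ℝ) * ∑ p ∈ S K,
            (‖MvPolynomial.coeff p.1 f‖ * ‖MvPolynomial.coeff p.2 g‖) ^ 2 / u p := by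
      refine le_trans (le_trans (pow_le_pow_left₀ (norm_nonneg _) htri 2) hCS) ?_
      exact mul_le_mul_of_nonneg_right hV hsum2nonneg
    calc ‖MvPolynomial.coeff K (f * g)‖ ^ 2 * w K / (Nat.factorial N : ℝ)
        ≤ (((N.choose D : ℕ) : ℝ) * ∑ p ∈ S K,
            (‖MvPolynomial.coeff p.1 f‖ * ‖MvPolynomial.coeff p.2 g‖) ^ 2 / u p)
            * w K / (Nat.factorial N : ℝ) := by
          apply div_le_div_of_nonneg_right ?_ ?_
          · exact mul_le_mul_of_nonneg_right hc2 (le_of_lt (hwpos K))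
          · positivity
      _ = ∑ p ∈ S K, F p := by
          rw [Finset.mul_sum, Finset.sum_mul, Finset.sum_div]
          exact Finset.sum_congr rfl hterm
  -- combine over K
  have hdisj : (((f * g).support : Set (Fin (n+1) →₀ ℕ))).PairwiseDisjoint S := by
    intro K _ K' _ hne
    simp only [Function.onFun]
    rw [Finset.disjoint_left]
    intro p hp hp'
    simp only [hS, Finset.mem_filter, Finset.HasAntidiagonal.mem_antidiagonal] at hp hp'
    exact hne (hp.1.symm.trans hp'.1)
  have hsub : (f * g).support.biUnion S ⊆ f.support ×ˢ g.support := by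
    intro p hp
    rw [Finset.mem_biUnion] at hp
    obtain ⟨K, _, hp⟩ := hp
    simp only [hS, Finset.mem_filter] at hp
    exact Finset.mem_product.2 hp.2
  calc ∑ K ∈ (f * g).support, ‖MvPolynomial.coeff K (f * g)‖ ^ 2 * w K / (Nat.factorial N : ℝ)
      ≤ ∑ K ∈ (f * g).support, ∑ p ∈ S K, F p := Finset.sum_le_sum key
    _ = ∑ p ∈ (f * g).support.biUnion S, F p := (Finset.sum_biUnion hdisj).symm
    _ ≤ ∑ p ∈ f.support ×ˢ g.support, F p :=
        Finset.sum_le_sum_of_subset_of_nonneg hsub (fun p _ _ => hFnonneg p)
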